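/- Let G be a finite simple graph that is C_3-free, C_5-free and C_6-free, let R be a minimal redundant set of G, and let x ∈ red(R). Then |red(R) ∩ N(x)| ≤ 2 and |red(R) ∩ N²(x)| ≤ 1, where N²(x) is the set of vertices at distance exactly 2 from x. -/

import Mathlib

open Set SimpleGraph

variable {V : Type*}

/-- The closed neighborhood `N[v]` of a vertex. -/
def closedNbr (G : SimpleGraph V) (v : V) : Set V := insert v (G.neighborSet v)

/-- Private neighbors of `x` with respect to `I`. -/
def privSet (G : SimpleGraph V) (x : V) (I : Set V) : Set V :=
  {y ∈ closedNbr G x | closedNbr G y ∩ I = {x}}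

/-- A set is irredundant if every element has a private neighbor. -/
def Irred (G : SimpleGraph V) (I : Set V) : Prop := ∀ x ∈ I, (privSet G x I).Nonempty

/-- A maximal irredundant set. -/
def MaxIrred (G : SimpleGraph V) (I : Set V) : Prop :=
  Irred G I ∧ ∀ J : Set V, Irred G J → I ⊆ J → J = I

def Redundant (G : SimpleGraph V) (R : Set V) : Prop := ¬ Irred G R

def MinRedundant (G : SimpleGraph V) (R : Set V) : Prop :=
  Redundant G R ∧ ∀ S : Set V, S ⊂ R → ¬ Redundant G S

/-- The set of redundant vertices of a set. -/
def redVerts (G : SimpleGraph V) (R : Set V) : Set V := {x ∈ R | privSet G x R = ∅}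

def Dominating (G : SimpleGraph V) (D : Set V) : Prop := ∀ v : V, ∃ d ∈ D, v ∈ closedNbr G d

def MinDominating (G : SimpleGraph V) (D : Set V) : Prop :=
  Dominating G D ∧ ∀ S : Set V, S ⊂ D → ¬ Dominating G S

/-- Vertices at distance at most 2 from `x`. -/
def ball2 (G : SimpleGraph V) (x : V) : Set V :=
  {y | y = x ∨ G.Adj x y ∨ ∃ w, G.Adj x w ∧ G.Adj w y}

/-- Vertices at distance exactly 2 from `x`. -/
def sphere2 (G : SimpleGraph V) (x : V) : Set V :=
  {y | y ≠ x ∧ ¬ G.Adj x y ∧ ∃ w, G.Adj x w ∧ G.Adj w y}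

/-- `G` contains no induced cycle of length `k`. -/
def CFree (G : SimpleGraph V) (k : ℕ) : Prop :=
  IsEmpty (SimpleGraph.cycleGraph k ↪g G)

/-- `S` dominates `B` through open neighborhoods. -/
def DomOver (G : SimpleGraph V) (S B : Set V) : Prop := ∀ b ∈ B, ∃ s ∈ S, G.Adj s b

def MinDomOver (G : SimpleGraph V) (S B : Set V) : Prop :=
  DomOver G S B ∧ ∀ S' : Set V, S' ⊂ S → ¬ DomOver G S' B

/-- `N(Y)`, the union of open neighborhoods of elements of `Y`. -/
def nbrUnion (G : SimpleGraph V) (Y : Set V) : Set V := ⋃ y ∈ Y, G.neighborSet y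

/-- Private edges of `x` with respect to `I` in a hypergraph. -/
def hypPriv (H : Set (Set V)) (x : V) (I : Set V) : Set (Set V) := {E ∈ H | E ∩ I = {x}}

def HypIrred (H : Set (Set V)) (I : Set V) : Prop := ∀ x ∈ I, (hypPriv H x I).Nonempty

def HypMaxIrred (H : Set (Set V)) (I : Set V) : Prop :=
  HypIrred H I ∧ ∀ J : Set V, HypIrred H J → I ⊆ J → J = I

/-- The trace of a hypergraph on a set `S`. -/
def htrace (H : Set (Set V)) (S : Set V) : Set (Set V) :=
  {F | ∃ E ∈ H, F = E ∩ S ∧ (E ∩ S).Nonempty}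

/-- The closed-neighborhood hypergraph of a graph. -/
def nbrHyp (G : SimpleGraph V) : Set (Set V) := Set.range (closedNbr G)

/-- The first `i` vertices in the ordering `v` (zero-based: `v 0, …, v (i-1)`). -/
def firstVerts (v : ℕ → V) (i : ℕ) : Set V := {x | ∃ j < i, v j = x}

/-- The incidence co-bipartite graph of the closed-neighborhood hypergraph of `G`:
`Sum.inl` is the vertex side `V`, `Sum.inr` is the copy `U`. -/
def cobip (G : SimpleGraph V) : SimpleGraph (V ⊕ V) :=
  SimpleGraph.fromRel (fun a b => match a, b with
    | Sum.inl _, Sum.inl _ => True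
    | Sum.inr _, Sum.inr _ => True
    | Sum.inl a, Sum.inr b => a = b ∨ G.Adj a b
    | Sum.inr _, Sum.inl _ => False)

lemma noC3 {G : SimpleGraph V} (h : CFree G 3) {a b c : V}
    (hab : G.Adj a b) (hbc : G.Adj b c) (hca : G.Adj c a) : False := by
  have hne1 : a ≠ b := hab.ne
  have hne2 : b ≠ c := hbc.ne
  have hne3 : c ≠ a := hca.ne
  have hba := hab.symm; have hcb := hbc.symm; have hac := hca.symm
  refine h.elim ⟨⟨![a,b,c], ?_⟩, ?_⟩
  · intro i j hij; fin_cases i <;> fin_cases j <;> simp_all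
  · intro i j; change G.Adj (![a,b,c] i) (![a,b,c] j) ↔ _; fin_cases i <;> fin_cases j <;>
      simp_all [cycleGraph_adj'] <;> decide

lemma noC5 {G : SimpleGraph V} (h : CFree G 5) {a b c d e : V}
    (hab : G.Adj a b) (hbc : G.Adj b c) (hcd : G.Adj c d) (hde : G.Adj d e)
    (hea : G.Adj e a)
    (hac : ¬ G.Adj a c) (had : ¬ G.Adj a d) (hbd : ¬ G.Adj b d)
    (hbe : ¬ G.Adj b e) (hce : ¬ G.Adj c e)
    (nac : a ≠ c) (nad : a ≠ d) (nbd : b ≠ d) (nbe : b ≠ e) (nce : c ≠ e) : False := by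
  have n1 : a ≠ b := hab.ne
  have n2 : b ≠ c := hbc.ne
  have n3 : c ≠ d := hcd.ne
  have n4 : d ≠ e := hde.ne
  have n5 : e ≠ a := hea.ne
  have s1 := hab.symm; have s2 := hbc.symm; have s3 := hcd.symm
  have s4 := hde.symm; have s5 := hea.symm
  have m1 : ¬ G.Adj c a := fun h' => hac h'.symm
  have m2 : ¬ G.Adj d a := fun h' => had h'.symm
  have m3 : ¬ G.Adj d b := fun h' => hbd h'.symm
  have m4 : ¬ G.Adj e b := fun h' => hbe h'.symm
  have m5 : ¬ G.Adj e c := fun h' => hce h'.symm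
  refine h.elim ⟨⟨![a,b,c,d,e], ?_⟩, ?_⟩
  · intro i j hij; fin_cases i <;> fin_cases j <;> simp_all
  · intro i j; change G.Adj (![a,b,c,d,e] i) (![a,b,c,d,e] j) ↔ _; fin_cases i <;> fin_cases j <;>
      simp_all [cycleGraph_adj'] <;> decide

lemma noC6 {G : SimpleGraph V} (h : CFree G 6) {a b c d e f : V}
    (hab : G.Adj a b) (hbc : G.Adj b c) (hcd : G.Adj c d) (hde : G.Adj d e)
    (hef : G.Adj e f) (hfa : G.Adj f a)
    (hac : ¬ G.Adj a c) (had : ¬ G.Adj a d) (hae : ¬ G.Adj a e)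
    (hbd : ¬ G.Adj b d) (hbe : ¬ G.Adj b e) (hbf : ¬ G.Adj b f)
    (hce : ¬ G.Adj c e) (hcf : ¬ G.Adj c f) (hdf : ¬ G.Adj d f)
    (nac : a ≠ c) (nad : a ≠ d) (nae : a ≠ e) (nbd : b ≠ d) (nbe : b ≠ e)
    (nbf : b ≠ f) (nce : c ≠ e) (ncf : c ≠ f) (ndf : d ≠ f) : False := by
  have n1 : a ≠ b := hab.ne
  have n2 : b ≠ c := hbc.ne
  have n3 : c ≠ d := hcd.ne
  have n4 : d ≠ e := hde.ne
  have n5 : e ≠ f := hef.ne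
  have n6 : f ≠ a := hfa.ne
  have s1 := hab.symm; have s2 := hbc.symm; have s3 := hcd.symm
  have s4 := hde.symm; have s5 := hef.symm; have s6 := hfa.symm
  have m1 : ¬ G.Adj c a := fun h' => hac h'.symm
  have m2 : ¬ G.Adj d a := fun h' => had h'.symm
  have m3 : ¬ G.Adj e a := fun h' => hae h'.symm
  have m4 : ¬ G.Adj d b := fun h' => hbd h'.symm
  have m5 : ¬ G.Adj e b := fun h' => hbe h'.symm
  have m6 : ¬ G.Adj f b := fun h' => hbf h'.symm
  have m7 : ¬ G.Adj e c := fun h' => hce h'.symm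
  have m8 : ¬ G.Adj f c := fun h' => hcf h'.symm
  have m9 : ¬ G.Adj f d := fun h' => hdf h'.symm
  have e5 : (![a,b,c,d,e,f] : Fin 6 → V) 5 = f := rfl
  refine h.elim ⟨⟨![a,b,c,d,e,f], ?_⟩, ?_⟩
  · intro i j hij; fin_cases i <;> fin_cases j <;> simp_all [e5]
  · intro i j; change G.Adj (![a,b,c,d,e,f] i) (![a,b,c,d,e,f] j) ↔ _; fin_cases i <;> fin_cases j <;>
      simp_all [cycleGraph_adj', e5] <;> decide

lemma mem_closedNbr {G : SimpleGraph V} {u w : V} :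
    u ∈ closedNbr G w ↔ u = w ∨ G.Adj w u := by
  simp [closedNbr, or_comm]

lemma keyW {G : SimpleGraph V} {R : Set V} (hR : MinRedundant G R) {z s : V}
    (hz : z ∈ R) (hzred : privSet G z R = ∅) (hs : s ∈ R) (hzs : z ≠ s) :
    ∃ w, w ∈ closedNbr G z ∧ closedNbr G w ∩ R = {z, s} := by
  have hsub : R \ {s} ⊂ R := Set.sdiff_singleton_ssubset.mpr hs
  have hirred : Irred G (R \ {s}) := not_not.mp (hR.2 _ hsub)
  obtain ⟨w, hw1, hw2⟩ := hirred z ⟨hz, by simpa using hzs⟩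
  refine ⟨w, hw1, ?_⟩
  have hne : closedNbr G w ∩ R ≠ {z} := by
    intro hEq
    have hmem : w ∈ privSet G z R := ⟨hw1, hEq⟩
    rw [hzred] at hmem
    exact hmem
  have hsubzs : closedNbr G w ∩ R ⊆ {z, s} := by
    rintro t ⟨ht1, ht2⟩
    by_cases hts : t = s
    · exact Or.inr hts
    · have : t ∈ closedNbr G w ∩ (R \ {s}) := ⟨ht1, ht2, hts⟩
      rw [hw2] at this
      exact Or.inl this
  have hzmem : z ∈ closedNbr G w ∩ R := by
    have : z ∈ closedNbr G w ∩ (R \ {s}) := by rw [hw2]; rfl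
    exact ⟨this.1, this.2.1⟩
  have hsmem : s ∈ closedNbr G w ∩ R := by
    by_contra hs'
    apply hne
    apply Set.Subset.antisymm
    · intro t ht
      rcases hsubzs ht with h | h
      · exact h
      · exact absurd (h ▸ ht) hs'
    · intro t ht
      rwa [Set.mem_singleton_iff.mp ht]
  apply Set.Subset.antisymm hsubzs
  rintro t (h | h)
  · rwa [h]
  · rwa [Set.mem_singleton_iff.mp h]

/-- in a `(C₃, C₅, C₆)`-free graph, for a minimal redundant set `R` and
`x ∈ red(R)`, we have `|red(R) ∩ N(x)| ≤ 2` and `|red(R) ∩ N²(x)| ≤ 1`. -/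
theorem stmt10 [Fintype V] (G : SimpleGraph V) (h3 : CFree G 3) (h5 : CFree G 5)
    (h6 : CFree G 6) (R : Set V) (hR : MinRedundant G R) (x : V) (hx : x ∈ redVerts G R) :
    (redVerts G R ∩ G.neighborSet x).ncard ≤ 2 ∧
    (redVerts G R ∩ sphere2 G x).ncard ≤ 1 := by
  obtain ⟨hxR, hxpriv⟩ := hx
  have distinguish : ∀ (w w' u : V) (S S' : Set V), closedNbr G w ∩ R = S →
      closedNbr G w' ∩ R = S' → u ∈ S → u ∉ S' → w ≠ w' := by
    intro w w' u S S' hw hw' hu hu' heq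
    rw [heq, hw'] at hw
    exact hu' (hw ▸ hu)
  have notinW : ∀ w z z' u : V, closedNbr G w ∩ R = {z, z'} → u ∈ R →
      u ≠ z → u ≠ z' → u ∉ closedNbr G w := by
    intro w z z' u hw hu h1 h2 hmem
    have : u ∈ closedNbr G w ∩ R := ⟨hmem, hu⟩
    rw [hw] at this
    rcases this with h | h
    · exact h1 h
    · exact h2 h
  constructor
  · -- the neighbor bound
    by_contra hcon
    push_neg at hcon
    obtain ⟨t, hts, htc⟩ := Set.exists_subset_card_eq hcon
    obtain ⟨z1, z2, z3, n12, n13, n23, rfl⟩ := Set.ncard_eq_three.mp htc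
    obtain ⟨⟨hz1R, hz1p⟩, ha1⟩ := hts (by simp : z1 ∈ ({z1,z2,z3} : Set V))
    obtain ⟨⟨hz2R, hz2p⟩, ha2⟩ := hts (by simp : z2 ∈ ({z1,z2,z3} : Set V))
    obtain ⟨⟨hz3R, hz3p⟩, ha3⟩ := hts (by simp : z3 ∈ ({z1,z2,z3} : Set V))
    have ha1 : G.Adj x z1 := ha1
    have ha2 : G.Adj x z2 := ha2
    have ha3 : G.Adj x z3 := ha3
    have key2 : ∀ z : V, z ∈ R → privSet G z R = ∅ → G.Adj x z →
        closedNbr G z ∩ R = {z, x} ∨ closedNbr G x ∩ R = {z, x} := by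
      intro z hzR hzp haz
      obtain ⟨w, hw1, hw2⟩ := keyW hR hzR hzp hxR haz.ne'
      have hxw : x ∈ closedNbr G w := by
        have : x ∈ closedNbr G w ∩ R := by rw [hw2]; simp
        exact this.1
      by_cases hwz : w = z
      · left; rwa [hwz] at hw2
      · by_cases hwx : w = x
        · right; rwa [hwx] at hw2
        · exfalso
          have haw1 : G.Adj z w := by
            rcases mem_closedNbr.mp hw1 with h | h
            · exact absurd h hwz
            · exact h
          have haw2 : G.Adj w x := by
            rcases mem_closedNbr.mp hxw with h | h
            · exact absurd h.symm hwx
            · exact h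
          exact noC3 h3 haz haw1 haw2
    have hleft : ∀ z z' : V, z ∈ R → privSet G z R = ∅ → G.Adj x z → G.Adj x z' →
        z' ∈ R → z' ≠ z → closedNbr G z ∩ R = {z, x} := by
      intro z z' hzR hzp haz haz' hz'R hne
      rcases key2 z hzR hzp haz with h | h
      · exact h
      · exfalso
        have : z' ∈ closedNbr G x ∩ R := ⟨mem_closedNbr.mpr (Or.inr haz'), hz'R⟩
        rw [h] at this
        rcases this with h' | h'
        · exact hne h'
        · exact haz'.ne' h'
    have N1 : closedNbr G z1 ∩ R = {z1, x} := hleft z1 z2 hz1R hz1p ha1 ha2 hz2R (Ne.symm n12)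
    have N2 : closedNbr G z2 ∩ R = {z2, x} := hleft z2 z1 hz2R hz2p ha2 ha1 hz1R n12
    have N3 : closedNbr G z3 ∩ R = {z3, x} := hleft z3 z1 hz3R hz3p ha3 ha1 hz1R n13
    have pairW : ∀ z z' : V, z ∈ R → privSet G z R = ∅ → G.Adj x z → G.Adj x z' →
        z' ∈ R → z ≠ z' → closedNbr G z ∩ R = {z, x} → closedNbr G z' ∩ R = {z', x} →
        ∃ w, G.Adj z w ∧ G.Adj w z' ∧ closedNbr G w ∩ R = {z, z'} := by
      intro z z' hzR hzp haz haz' hz'R hne Nz Nz'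
      obtain ⟨w, hw1, hw2⟩ := keyW hR hzR hzp hz'R hne
      have hxnot : x ∉ closedNbr G w :=
        notinW w z z' x hw2 hxR haz.ne haz'.ne
      have hwz : w ≠ z := by
        intro h
        apply hxnot
        rw [h]
        have : x ∈ closedNbr G z ∩ R := by rw [Nz]; simp
        exact this.1
      have hadj1 : G.Adj z w := by
        rcases mem_closedNbr.mp hw1 with h | h
        · exact absurd h hwz
        · exact h
      have hz'mem : z' ∈ closedNbr G w := by
        have : z' ∈ closedNbr G w ∩ R := by rw [hw2]; simp
        exact this.1
      have hwz' : w ≠ z' := by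
        intro h
        rw [h] at hw2
        have : x ∈ closedNbr G z' ∩ R := by rw [Nz']; simp
        rw [hw2] at this
        rcases this with h' | h'
        · exact haz.ne h'
        · exact haz'.ne h'
      have hadj2 : G.Adj w z' := by
        rcases mem_closedNbr.mp hz'mem with h | h
        · exact absurd h.symm hwz'
        · exact h
      exact ⟨w, hadj1, hadj2, hw2⟩
    obtain ⟨w12, e11, e12, W12⟩ := pairW z1 z2 hz1R hz1p ha1 ha2 hz2R n12 N1 N2
    obtain ⟨w13, e21, e22, W13⟩ := pairW z1 z3 hz1R hz1p ha1 ha3 hz3R n13 N1 N3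
    obtain ⟨w23, e31, e32, W23⟩ := pairW z2 z3 hz2R hz2p ha2 ha3 hz3R n23 N2 N3
    have nz12 : ¬ G.Adj z1 z2 := fun h => noC3 h3 ha1 h ha2.symm
    have nz13 : ¬ G.Adj z1 z3 := fun h => noC3 h3 ha1 h ha3.symm
    have nz23 : ¬ G.Adj z2 z3 := fun h => noC3 h3 ha2 h ha3.symm
    have f1 : z3 ∉ closedNbr G w12 := notinW _ _ _ _ W12 hz3R (Ne.symm n13) (Ne.symm n23)
    have f2 : z2 ∉ closedNbr G w13 := notinW _ _ _ _ W13 hz2R (Ne.symm n12) n23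
    have f3 : z1 ∉ closedNbr G w23 := notinW _ _ _ _ W23 hz1R n12 n13
    have g1 : ¬ G.Adj w12 z3 := fun h => f1 (mem_closedNbr.mpr (Or.inr h))
    have g2 : ¬ G.Adj w13 z2 := fun h => f2 (mem_closedNbr.mpr (Or.inr h))
    have g3 : ¬ G.Adj w23 z1 := fun h => f3 (mem_closedNbr.mpr (Or.inr h))
    have k1 : z3 ≠ w12 := fun h => f1 (h ▸ mem_closedNbr.mpr (Or.inl rfl))
    have k2 : z2 ≠ w13 := fun h => f2 (h ▸ mem_closedNbr.mpr (Or.inl rfl))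
    have k3 : z1 ≠ w23 := fun h => f3 (h ▸ mem_closedNbr.mpr (Or.inl rfl))
    have d12 : w12 ≠ w13 := distinguish _ _ z2 _ _ W12 W13 (by simp) (by simp [Ne.symm n12, n23])
    have d13 : w12 ≠ w23 := distinguish _ _ z1 _ _ W12 W23 (by simp) (by simp [n12, n13])
    have d23 : w13 ≠ w23 := distinguish _ _ z1 _ _ W13 W23 (by simp) (by simp [n12, n13])
    have nw1 : ¬ G.Adj w12 w13 := fun h => noC3 h3 e11 h e21.symm
    have nw2 : ¬ G.Adj w12 w23 := fun h => noC3 h3 e12.symm h e31.symm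
    have nw3 : ¬ G.Adj w13 w23 := fun h => noC3 h3 e22.symm h e32
    exact noC6 h6 e11 e12 e31 e32 e22.symm e21.symm
      nz12 (fun h => g3 h.symm) nz13 nw2 g1 nw1 nz23 (fun h => g2 h.symm)
      (fun h => nw3 h.symm)
      n12 k3 n13 d13 (Ne.symm k1) d12 n23 k2 (Ne.symm d23)
  · -- the sphere bound
    by_contra hcon
    push_neg at hcon
    obtain ⟨t, hts, htc⟩ := Set.exists_subset_card_eq hcon
    obtain ⟨z1, z2, n12, rfl⟩ := Set.ncard_eq_two.mp htc
    obtain ⟨⟨hz1R, hz1p⟩, hs1⟩ := hts (by simp : z1 ∈ ({z1,z2} : Set V))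
    obtain ⟨⟨hz2R, hz2p⟩, hs2⟩ := hts (by simp : z2 ∈ ({z1,z2} : Set V))
    obtain ⟨ne1, na1, -⟩ := hs1
    obtain ⟨ne2, na2, -⟩ := hs2
    have yfact : ∀ z : V, z ∈ R → privSet G z R = ∅ → z ≠ x → ¬ G.Adj x z →
        ∃ y, G.Adj z y ∧ G.Adj y x ∧ closedNbr G y ∩ R = {z, x} := by
      intro z hzR hzp hne hna
      obtain ⟨y, hy1, hy2⟩ := keyW hR hzR hzp hxR hne
      have hxy : x ∈ closedNbr G y := by
        have : x ∈ closedNbr G y ∩ R := by rw [hy2]; simp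
        exact this.1
      have hyz : y ≠ z := by
        intro h
        rw [h] at hxy
        rcases mem_closedNbr.mp hxy with h' | h'
        · exact hne h'.symm
        · exact hna h'.symm
      have hadj1 : G.Adj z y := by
        rcases mem_closedNbr.mp hy1 with h | h
        · exact absurd h hyz
        · exact h
      have hyx : y ≠ x := by
        intro h
        rw [h] at hy1
        rcases mem_closedNbr.mp hy1 with h' | h'
        · exact hne h'.symm
        · exact hna h'.symm
      have hadj2 : G.Adj y x := by
        rcases mem_closedNbr.mp hxy with h | h
        · exact absurd h.symm hyx
        · exact h
      exact ⟨y, hadj1, hadj2, hy2⟩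
    obtain ⟨y1, b11, b12, Y1⟩ := yfact z1 hz1R hz1p ne1 na1
    obtain ⟨y2, b21, b22, Y2⟩ := yfact z2 hz2R hz2p ne2 na2
    have dy : y1 ≠ y2 := distinguish _ _ z1 _ _ Y1 Y2 (by simp) (by simp [n12, ne1])
    have nyy : ¬ G.Adj y1 y2 := fun h => noC3 h3 b12 b22.symm h.symm
    have fy1 : z2 ∉ closedNbr G y1 := notinW _ _ _ _ Y1 hz2R (Ne.symm n12) ne2
    have fy2 : z1 ∉ closedNbr G y2 := notinW _ _ _ _ Y2 hz1R n12 ne1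
    have gy1 : ¬ G.Adj y1 z2 := fun h => fy1 (mem_closedNbr.mpr (Or.inr h))
    have gy2 : ¬ G.Adj y2 z1 := fun h => fy2 (mem_closedNbr.mpr (Or.inr h))
    have ky1 : z2 ≠ y1 := fun h => fy1 (h ▸ mem_closedNbr.mpr (Or.inl rfl))
    have ky2 : z1 ≠ y2 := fun h => fy2 (h ▸ mem_closedNbr.mpr (Or.inl rfl))
    by_cases hzz : G.Adj z1 z2
    · exact noC5 h5 b12.symm b11.symm hzz b21 b22
        na1 na2 gy1 nyy (fun h => gy2 h.symm)
        (fun h => ne1 h.symm) (fun h => ne2 h.symm) (Ne.symm ky1) dy ky2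
    · obtain ⟨w, hw1, hw2⟩ := keyW hR hz1R hz1p hz2R n12
      have hxnot : x ∉ closedNbr G w := notinW _ _ _ _ hw2 hxR (Ne.symm ne1) (Ne.symm ne2)
      have hwx : w ≠ x := fun h => hxnot (h ▸ mem_closedNbr.mpr (Or.inl rfl))
      have hwnx : ¬ G.Adj w x := fun h => hxnot (mem_closedNbr.mpr (Or.inr h))
      have hwz1 : w ≠ z1 := by
        intro h
        rw [h] at hw2
        have : z2 ∈ closedNbr G z1 ∩ R := by rw [hw2]; simp
        rcases mem_closedNbr.mp this.1 with h' | h'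
        · exact n12 h'.symm
        · exact hzz h'
      have hadj1 : G.Adj z1 w := by
        rcases mem_closedNbr.mp hw1 with h | h
        · exact absurd h hwz1
        · exact h
      have hz2mem : z2 ∈ closedNbr G w := by
        have : z2 ∈ closedNbr G w ∩ R := by rw [hw2]; simp
        exact this.1
      have hwz2 : w ≠ z2 := by
        intro h
        rw [h] at hw1
        rcases mem_closedNbr.mp hw1 with h' | h'
        · exact n12 h'.symm
        · exact hzz h'
      have hadj2 : G.Adj w z2 := by
        rcases mem_closedNbr.mp hz2mem with h | h
        · exact absurd h.symm hwz2
        · exact h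
      have dwy1 : w ≠ y1 := Ne.symm (distinguish _ _ x _ _ Y1 hw2 (by simp) (by simp [Ne.symm ne1, Ne.symm ne2]))
      have dwy2 : w ≠ y2 := Ne.symm (distinguish _ _ x _ _ Y2 hw2 (by simp) (by simp [Ne.symm ne1, Ne.symm ne2]))
      have nwy1 : ¬ G.Adj y1 w := fun h => noC3 h3 b11 h hadj1.symm
      have nwy2 : ¬ G.Adj y2 w := fun h => noC3 h3 b21 h hadj2
      exact noC6 h6 b12.symm b11.symm hadj1 hadj2 b21 b22
        na1 (fun h => hwnx h.symm) na2 nwy1 gy1 nyy hzz (fun h => gy2 h.symm)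
        (fun h => nwy2 h.symm)
        (fun h => ne1 h.symm) (Ne.symm hwx) (fun h => ne2 h.symm) (Ne.symm dwy1)
        (Ne.symm ky1) dy n12 ky2 dwy2
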